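/- arXiv:0807.1135 — 3 statements merged into one kernel-verified Lean document; each statement's English description precedes it below -/
import Mathlib

section
/- Let F/K be a Galois extension of number fields with Galois group isomorphic to the dihedral group D_q of order 2q with q odd, let L be the subfield fixed by the cyclic subgroup of order q, and let k be the subfield fixed by a subgroup of order 2. Then the group of roots of unity of k equals that of K, and the group of roots of unity of F equals that of L. -/
/-- Let `F/K` be a Galois extension of number fields with group isomorphic to the
dihedral group `D_q`, `q` odd, let `L` be the subfield fixed by the rotation
subgroup `C_q` and `k` the subfield fixed by the order-2 subgroup `⟨σ⟩`.  Then
the roots of unity of `k` are exactly those of `K`, and the roots of unity of `F`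
are exactly those of `L`. -/
theorem rootsOfUnity_dihedral (q : ℕ) [NeZero q] (hq : Odd q) (hq1 : 1 < q)
    (K F : Type*) [Field K] [NumberField K] [Field F] [NumberField F]
    [Algebra K F] [IsGalois K F]
    (e : (F ≃ₐ[K] F) ≃* DihedralGroup q)
    (Lf kf : IntermediateField K F)
    (hL : Lf = IntermediateField.fixedField
      ((Subgroup.zpowers (DihedralGroup.r (1 : ZMod q))).comap e.toMonoidHom))
    (hk : kf = IntermediateField.fixedField
      ((Subgroup.zpowers (DihedralGroup.sr (0 : ZMod q))).comap e.toMonoidHom)) :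
    {x : F | ∃ n : ℕ, 0 < n ∧ x ^ n = 1}
      = {x : F | x ∈ Lf ∧ ∃ n : ℕ, 0 < n ∧ x ^ n = 1} ∧
    {x : F | x ∈ kf ∧ ∃ n : ℕ, 0 < n ∧ x ^ n = 1}
      = {x : F | x ∈ (⊥ : IntermediateField K F) ∧ ∃ n : ℕ, 0 < n ∧ x ^ n = 1} := by
  classical
  have hFD : FiniteDimensional K F := Module.Finite.of_restrictScalars_finite ℚ K F
  -- Any two automorphisms commute on roots of unity
  have comm : ∀ x : F, (∃ n : ℕ, 0 < n ∧ x ^ n = 1) →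
      ∀ g h : F ≃ₐ[K] F, g (h x) = h (g x) := by
    rintro x ⟨n, hn, hxn⟩ g h
    have hnz : NeZero n := ⟨hn.ne'⟩
    -- each automorphism acts on x (a root of unity) by raising to some integer power
    have key : ∀ g : F ≃ₐ[K] F, ∃ a : ℤ, g x = x ^ a := by
      intro g
      obtain ⟨ζ, hζ⟩ := IsCyclic.exists_generator (α := rootsOfUnity n F)
      set c : F := ((ζ : Fˣ) : F) with hc
      have hcn : c ^ n = 1 := (mem_rootsOfUnity' n (ζ : Fˣ)).mp ζ.2
      have hgcn : (g c) ^ n = 1 := by rw [← map_pow, hcn, map_one]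
      -- x is a power of c
      set xu : rootsOfUnity n F := rootsOfUnity.mkOfPowEq x hxn with hxu
      obtain ⟨k, hk⟩ := Subgroup.mem_zpowers_iff.mp (hζ xu)
      have hxc : x = c ^ k := by
        have := congrArg (fun y : rootsOfUnity n F => ((y : Fˣ) : F)) hk
        simpa [hc, hxu, rootsOfUnity.coe_mkOfPowEq, SubgroupClass.coe_zpow, Units.val_zpow_eq_zpow_val] using this.symm
      -- g c is a power of c
      set gu : rootsOfUnity n F := rootsOfUnity.mkOfPowEq (g c) hgcn with hgu
      obtain ⟨a, ha⟩ := Subgroup.mem_zpowers_iff.mp (hζ gu)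
      have hgc : g c = c ^ a := by
        have := congrArg (fun y : rootsOfUnity n F => ((y : Fˣ) : F)) ha
        simpa [hc, hgu, rootsOfUnity.coe_mkOfPowEq, SubgroupClass.coe_zpow, Units.val_zpow_eq_zpow_val] using this.symm
      refine ⟨a, ?_⟩
      rw [hxc, map_zpow₀, hgc, ← zpow_mul, ← zpow_mul, mul_comm]
    obtain ⟨a, ha⟩ := key g
    obtain ⟨b, hb⟩ := key h
    rw [ha, hb, map_zpow₀, map_zpow₀, ha, hb, ← zpow_mul, ← zpow_mul, mul_comm]
  -- distinguished automorphisms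
  set u : F ≃ₐ[K] F := e.symm (DihedralGroup.r 1) with hu
  set s : F ≃ₐ[K] F := e.symm (DihedralGroup.sr 0) with hs
  set t : F ≃ₐ[K] F := e.symm (DihedralGroup.sr 1) with ht
  have hst : s * t = u := by
    rw [hs, ht, hu, ← map_mul, DihedralGroup.sr_mul_sr]
    norm_num
  have hs2 : s * s = 1 := by
    rw [hs, ← map_mul, DihedralGroup.sr_mul_self, map_one]
  have ht2 : t * t = 1 := by
    rw [ht, ← map_mul, DihedralGroup.sr_mul_self, map_one]
  have huq : u ^ q = 1 := by
    rw [hu, ← map_pow, DihedralGroup.r_one_pow, ZMod.natCast_self, ← DihedralGroup.one_def,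
      map_one]
  -- image of a root of unity is a root of unity
  have himg : ∀ (g : F ≃ₐ[K] F) (y : F), (∃ n : ℕ, 0 < n ∧ y ^ n = 1) →
      (∃ n : ℕ, 0 < n ∧ (g y) ^ n = 1) := by
    rintro g y ⟨n, hn, hyn⟩
    exact ⟨n, hn, by rw [← map_pow, hyn, map_one]⟩
  -- u fixes every root of unity
  have hfix : ∀ x : F, (∃ n : ℕ, 0 < n ∧ x ^ n = 1) → u x = x := by
    intro x hx
    have h2 : u (u x) = x := by
      have e1 : u (u x) = s (t (s (t x))) := by
        rw [← hst]; rfl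
      rw [e1, comm (t x) (himg t x hx) t s]
      have e2 : t (t x) = x := by
        have := congrArg (fun f : F ≃ₐ[K] F => f x) ht2
        simpa using this
      rw [e2]
      have := congrArg (fun f : F ≃ₐ[K] F => f x) hs2
      simpa using this
    have heven : ∀ m : ℕ, (u ^ (2 * m)) x = x := by
      intro m
      induction m with
      | zero => simp
      | succ m ih =>
        have h21 : u ^ (2 * (m + 1)) = u ^ (2 * m) * (u * u) := by
          rw [mul_add, mul_one, pow_add, pow_two]
        rw [h21]
        show (u ^ (2 * m)) ((u * u) x) = x
        show (u ^ (2 * m)) (u (u x)) = x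
        rw [h2, ih]
    obtain ⟨m, hm⟩ := hq
    have hq2 : q = 2 * m + 1 := hm
    calc u x = u ((u ^ (2 * m)) x) := by rw [heven]
      _ = (u * u ^ (2 * m)) x := rfl
      _ = (u ^ q) x := by rw [hq2, pow_succ']
      _ = x := by rw [huq]; rfl
  -- hence all integer powers of u fix roots of unity
  have hfixz : ∀ x : F, (∃ n : ℕ, 0 < n ∧ x ^ n = 1) → ∀ m : ℤ, (u ^ m) x = x := by
    intro x hx m
    have hu' : u ∈ MulAction.stabilizer (F ≃ₐ[K] F) x := hfix x hx
    have := Subgroup.zpow_mem (MulAction.stabilizer (F ≃ₐ[K] F) x) hu' m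
    exact this
  -- every root of unity lies in Lf
  have hmemL : ∀ x : F, (∃ n : ℕ, 0 < n ∧ x ^ n = 1) → x ∈ Lf := by
    intro x hx
    rw [hL]
    intro g
    obtain ⟨m, hm⟩ := Subgroup.mem_zpowers_iff.mp g.2
    have hg : (g : F ≃ₐ[K] F) = u ^ m := by
      apply e.injective
      rw [map_zpow, hu, MulEquiv.apply_symm_apply, hm]
      rfl
    show (g : F ≃ₐ[K] F) x = x
    rw [hg]
    exact hfixz x hx m
  constructor
  · ext x
    simp only [Set.mem_setOf_eq]
    exact ⟨fun hx => ⟨hmemL x hx, hx⟩, fun hx => hx.2⟩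
  · ext x
    simp only [Set.mem_setOf_eq]
    constructor
    · rintro ⟨hxk, hx⟩
      refine ⟨?_, hx⟩
      -- x is fixed by s
      have hsx : s x = x := by
        rw [hk] at hxk
        have hmem : s ∈ (Subgroup.zpowers (DihedralGroup.sr (0 : ZMod q))).comap
            e.toMonoidHom := by
          show e s ∈ Subgroup.zpowers (DihedralGroup.sr (0 : ZMod q))
          rw [hs, MulEquiv.apply_symm_apply]
          exact Subgroup.mem_zpowers _
        exact hxk ⟨s, hmem⟩
      -- x is fixed by every automorphism
      have hall : ∀ g : F ≃ₐ[K] F, g x = x := by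
        intro g
        have : g = e.symm (e g) := (e.symm_apply_apply g).symm
        rcases hd : e g with i | i
        · have hg : g = u ^ (i.val : ℤ) := by
            apply e.injective
            rw [map_zpow, hu, MulEquiv.apply_symm_apply, hd, zpow_natCast,
              DihedralGroup.r_one_pow]
            simp [ZMod.natCast_val, ZMod.cast_id]
          rw [hg]
          exact hfixz x hx _
        · have hg : g = s * u ^ (i.val : ℤ) := by
            apply e.injective
            rw [map_mul, map_zpow, hu, hs, MulEquiv.apply_symm_apply,
              MulEquiv.apply_symm_apply, hd, zpow_natCast, DihedralGroup.r_one_pow,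
              DihedralGroup.sr_mul_r]
            simp [ZMod.natCast_val, ZMod.cast_id]
          rw [hg]
          show s ((u ^ (i.val : ℤ)) x) = x
          rw [hfixz x hx, hsx]
      have hbot : IntermediateField.fixedField (⊤ : Subgroup (F ≃ₐ[K] F)) =
          (⊥ : IntermediateField K F) :=
        OrderIso.map_bot (IsGalois.intermediateFieldEquivSubgroup (F := K) (E := F)).symm
      rw [← hbot]
      intro g
      exact hall g
    · rintro ⟨hxb, hx⟩
      exact ⟨(bot_le : (⊥ : IntermediateField K F) ≤ kf) hxb, hx⟩
end

section
/- Let F/K be a dihedral extension of number fields of degree 2q with q odd, with K totally real and F totally imaginary, and let k be the fixed field of an order-2 subgroup of Gal(F/K). Then k has exactly n real places and n(q-1)/2 pairs of complex places, where n = [K:ℚ]. -/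
open DihedralGroup

lemma aux_two_mul_surj {q : ℕ} (hq : Odd q) (j : ZMod q) : ∃ i : ZMod q, 2 * i = j := by
  obtain ⟨m, hm⟩ := hq
  refine ⟨((m + 1 : ℕ) : ZMod q) * j, ?_⟩
  have h2 : ((2 * (m + 1) : ℕ) : ZMod q) = 1 := by
    have : 2 * (m + 1) = q + 1 := by omega
    rw [this]
    push_cast [ZMod.natCast_self]
    ring
  calc 2 * (((m + 1 : ℕ) : ZMod q) * j) = ((2 * (m + 1) : ℕ) : ZMod q) * j := by push_cast; ring
    _ = j := by rw [h2, one_mul]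

lemma aux_two_mul_eq_zero {q : ℕ} (hq : Odd q) {i : ZMod q} (h : 2 * i = 0) : i = 0 := by
  obtain ⟨m, hm⟩ := hq
  have h2 : ((2 * (m + 1) : ℕ) : ZMod q) = 1 := by
    have : 2 * (m + 1) = q + 1 := by omega
    rw [this]
    push_cast [ZMod.natCast_self]
    ring
  calc i = ((2 * (m + 1) : ℕ) : ZMod q) * i := by rw [h2, one_mul]
    _ = ((m + 1 : ℕ) : ZMod q) * (2 * i) := by push_cast; ring
    _ = 0 := by rw [h, mul_zero]

lemma aux_conj_sr {q : ℕ} (hq : Odd q) (x : DihedralGroup q) (hx1 : x ≠ 1)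
    (hx2 : x * x = 1) : ∃ g : DihedralGroup q, g * x * g⁻¹ = sr 0 := by
  cases x with
  | r i =>
    exfalso
    apply hx1
    rw [r_mul_r, one_def] at hx2
    have hi : i + i = 0 := by injection hx2
    have : i = 0 := aux_two_mul_eq_zero hq (by rw [two_mul]; exact hi)
    rw [this, one_def]
  | sr j =>
    obtain ⟨i, hi⟩ := aux_two_mul_surj hq j
    refine ⟨r i, ?_⟩
    have hinv : (r i)⁻¹ = r (-i) := rfl
    rw [hinv, r_mul_sr, sr_mul_r]
    congr 1
    rw [← hi]
    ring

lemma aux_comm_sr {q : ℕ} (hq : Odd q) (g : DihedralGroup q)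
    (h : g * sr 0 = sr 0 * g) : g = 1 ∨ g = sr 0 := by
  cases g with
  | r i =>
    left
    rw [r_mul_sr, sr_mul_r] at h
    have : (0 - i : ZMod q) = 0 + i := by injection h
    have hi : i = 0 := aux_two_mul_eq_zero hq (by rw [two_mul]; linear_combination -this)
    rw [hi, one_def]
  | sr j =>
    right
    rw [sr_mul_sr, sr_mul_sr] at h
    have : (0 - j : ZMod q) = j - 0 := by injection h
    have hj : j = 0 := aux_two_mul_eq_zero hq (by rw [two_mul]; linear_combination -this)
    rw [hj]

lemma aux_mem_zpowers_sr {q : ℕ} {x : DihedralGroup q} :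
    x ∈ Subgroup.zpowers (sr (0 : ZMod q)) ↔ x = 1 ∨ x = sr 0 := by
  constructor
  · rintro ⟨k, rfl⟩
    have h2 : (sr (0 : ZMod q)) ^ (2 : ℤ) = 1 := by
      rw [show (2 : ℤ) = 1 + 1 from rfl, zpow_add, zpow_one]
      exact sr_mul_self 0
    rcases Int.even_or_odd k with ⟨m, rfl⟩ | ⟨m, rfl⟩
    · left
      show sr (0 : ZMod q) ^ (m + m) = 1
      rw [show m + m = 2 * m from by ring, zpow_mul, h2, one_zpow]
    · right
      show sr (0 : ZMod q) ^ (2 * m + 1) = sr 0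
      rw [zpow_add, zpow_one, zpow_mul, h2, one_zpow, one_mul]
  · rintro (rfl | rfl)
    · exact one_mem _
    · exact Subgroup.mem_zpowers _

open NumberField

/-- Let `F/K` be a dihedral extension of number fields of degree `2q`, `q` odd,
with `K` totally real of degree `n = [K:ℚ]` and `F` totally imaginary, and let
`k` be the fixed field of an order-2 subgroup of `Gal(F/K)`.  Then `k` has
exactly `n` real places and `n(q-1)/2` (pairs of conjugate) complex places. -/
theorem signature_of_dihedral_reflection_field
    (q : ℕ) [NeZero q] (hq : Odd q) (hq1 : 1 < q)
    (K F : Type*) [Field K] [NumberField K] [Field F] [NumberField F]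
    [Algebra K F] [IsGalois K F]
    (e : (F ≃ₐ[K] F) ≃* DihedralGroup q)
    (hKreal : ∀ v : InfinitePlace K, v.IsReal)
    (hFcomplex : ∀ w : InfinitePlace F, w.IsComplex)
    (kf : IntermediateField K F)
    (hk : kf = IntermediateField.fixedField
      ((Subgroup.zpowers (DihedralGroup.sr (0 : ZMod q))).comap e.toMonoidHom)) :
    Nat.card {w : InfinitePlace kf // w.IsReal} = Module.finrank ℚ K ∧
    2 * Nat.card {w : InfinitePlace kf // w.IsComplex}
      = Module.finrank ℚ K * (q - 1) := by
  classical
  set H : Subgroup (F ≃ₐ[K] F) :=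
    (Subgroup.zpowers (DihedralGroup.sr (0 : ZMod q))).comap e.toMonoidHom with hH
  subst hk
  set kf : IntermediateField K F := IntermediateField.fixedField H with hkf
  set G := F ≃ₐ[K] F with hG
  set s₀ : G := e.symm (DihedralGroup.sr 0) with hs₀
  -- basic group facts
  have hes₀ : e s₀ = DihedralGroup.sr 0 := e.apply_symm_apply _
  have hs₀ne : s₀ ≠ 1 := by
    intro h
    have : (DihedralGroup.sr (0 : ZMod q)) = 1 := by rw [← hes₀, h, map_one]
    exact absurd this (by rw [DihedralGroup.one_def]; intro h; cases h)
  have hmemH : ∀ σ : G, σ ∈ H ↔ (σ = 1 ∨ σ = s₀) := by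
    intro σ
    rw [hH, Subgroup.mem_comap]
    change e σ ∈ _ ↔ _
    rw [aux_mem_zpowers_sr]
    constructor
    · rintro (h | h)
      · left; exact e.injective (by rw [h, map_one])
      · right; exact e.injective (by rw [h, hes₀])
    · rintro (rfl | rfl)
      · left; exact map_one e
      · right; exact hes₀
  have hs₀H : s₀ ∈ H := (hmemH s₀).mpr (Or.inr rfl)
  -- cardinality of H
  have hcardH : Nat.card H = 2 := by
    have h1 : Nat.card H = Nat.card (Subgroup.zpowers (DihedralGroup.sr (0 : ZMod q))) :=
      Nat.card_congr (e.toEquiv.subtypeEquiv (fun x => Iff.rfl))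
    rw [h1, Nat.card_zpowers, DihedralGroup.orderOf_sr]
  -- degrees
  have hfinrankKF : Module.finrank K F = 2 * q := by
    rw [← IsGalois.card_aut_eq_finrank, Nat.card_congr e.toEquiv, DihedralGroup.nat_card]
  have hfinrankkfF : Module.finrank kf F = 2 := by
    rw [hkf, IntermediateField.finrank_fixedField_eq_card, hcardH]
  have hfinrankKkf : Module.finrank K kf = q := by
    have := Module.finrank_mul_finrank K kf F
    rw [hfinrankkfF, hfinrankKF] at this
    omega
  -- the conjugation element at each place of F
  have hram : ∀ v : InfinitePlace F, ¬ v.IsUnramified K :=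
    fun v => InfinitePlace.not_isUnramified_iff.mpr ⟨hFcomplex v, hKreal _⟩
  have hconj : ∀ v : InfinitePlace F, ∃ σ : G, σ ≠ 1 ∧
      ComplexEmbedding.IsConj (InfinitePlace.embedding v) σ := by
    intro v
    have h := hram v
    rw [← InfinitePlace.mk_embedding v, InfinitePlace.isUnramified_mk_iff_forall_isConj] at h
    push_neg at h
    obtain ⟨σ, hσ, hσ1⟩ := h
    exact ⟨σ, hσ1, hσ⟩
  choose conj hconj1 hconj2 using hconj
  have hstabset : ∀ v : InfinitePlace F,
      (MulAction.stabilizer G v : Set G) = {1, conj v} := by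
    intro v
    have h := (hconj2 v).coe_stabilizer_mk
    rwa [InfinitePlace.mk_embedding] at h
  have hstab : ∀ v : InfinitePlace F, conj v • v = v := by
    intro v
    have h : conj v ∈ (MulAction.stabilizer G v : Set G) := by
      rw [hstabset v]; exact Set.mem_insert_iff.mpr (Or.inr rfl)
    exact h
  have hmem_stab : ∀ (v : InfinitePlace F) (σ : G), σ ≠ 1 → σ • v = v → σ = conj v := by
    intro v σ hσ1 hσv
    have h : σ ∈ (MulAction.stabilizer G v : Set G) := hσv
    rw [hstabset v] at h
    rcases h with h | h
    · exact absurd h hσ1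
    · exact h
  have hconj_smul : ∀ (g : G) (v : InfinitePlace F), conj (g • v) = g * conj v * g⁻¹ := by
    intro g v
    refine (hmem_stab (g • v) _ ?_ ?_).symm
    · intro h
      apply hconj1 v
      have h2 : g * conj v = g := by
        have := mul_inv_eq_one.mp h
        exact this
      exact mul_left_cancel (a := g) (by rw [h2, mul_one])
    · rw [mul_smul, mul_smul, inv_smul_smul, hstab v]
  have hinvol : ∀ v : InfinitePlace F, conj v * conj v = 1 := by
    intro v
    have hsymm : ComplexEmbedding.IsConj (InfinitePlace.embedding v) (conj v).symm :=
      (hconj2 v).symm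
    have hext : conj v = (conj v).symm := (hconj2 v).ext hsymm
    have hinv : (conj v)⁻¹ = conj v := by
      rw [show (conj v)⁻¹ = (conj v).symm from rfl, ← hext]
    nth_rewrite 2 [← hinv]
    exact mul_inv_cancel _
  -- characterization of ramified places of F over kf
  have hfix : kf.fixingSubgroup = H := by
    rw [hkf]; exact IntermediateField.fixingSubgroup_fixedField H
  have hPhi_smul : ∀ (σ : kf.fixingSubgroup) (v : InfinitePlace F),
      (IntermediateField.fixingSubgroupEquiv kf σ) • v = (σ : G) • v := by
    intro σ v
    rfl
  have hunram_iff : ∀ v : InfinitePlace F, ¬ v.IsUnramified kf ↔ conj v = s₀ := by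
    intro v
    constructor
    · intro hv
      rw [InfinitePlace.isUnramified_iff_stabilizer_eq_bot] at hv
      obtain ⟨τ', hτ'⟩ := Subgroup.ne_bot_iff_exists_ne_one.mp hv
      set τ : F ≃ₐ[kf] F := (τ' : F ≃ₐ[kf] F) with hτ
      have hτv : τ • v = v := τ'.2
      set σ : kf.fixingSubgroup := (IntermediateField.fixingSubgroupEquiv kf).symm τ with hσ
      have hΦσ : IntermediateField.fixingSubgroupEquiv kf σ = τ :=
        (IntermediateField.fixingSubgroupEquiv kf).apply_symm_apply τ
      have hσv : (σ : G) • v = v := by rw [← hPhi_smul, hΦσ]; exact hτv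
      have hσ1 : (σ : G) ≠ 1 := by
        intro h1
        apply hτ'
        have h2 : σ = 1 := by exact_mod_cast OneMemClass.coe_eq_one.mp h1
        have h3 : τ = 1 := by rw [← hΦσ, h2, map_one]
        exact Subtype.ext (by rw [← hτ, h3]; rfl)
      have hσconj : (σ : G) = conj v := hmem_stab v _ hσ1 hσv
      have hcH : conj v ∈ H := by rw [← hfix, ← hσconj]; exact σ.2
      rcases (hmemH _).mp hcH with h | h
      · exact absurd h (hconj1 v)
      · exact h
    · intro h
      have hmem : conj v ∈ kf.fixingSubgroup := by rw [hfix, h]; exact hs₀H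
      set σ : kf.fixingSubgroup := ⟨conj v, hmem⟩ with hσ
      set τ := IntermediateField.fixingSubgroupEquiv kf σ with hτ
      have hτv : τ • v = v := by rw [hτ, hPhi_smul]; exact hstab v
      have hτ1 : τ ≠ 1 := by
        intro h1
        apply hconj1 v
        have h2 : σ = 1 := (IntermediateField.fixingSubgroupEquiv kf).injective
          (by rw [← hτ, h1, map_one])
        exact congrArg Subtype.val h2
      rw [InfinitePlace.isUnramified_iff_stabilizer_eq_bot]
      intro hbot
      apply hτ1
      have hmem2 : τ ∈ MulAction.stabilizer (F ≃ₐ[kf] F) v := hτv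
      rwa [hbot, Subgroup.mem_bot] at hmem2
  -- bijection between ramified places of F over kf and places of K
  have hbij : Nat.card {v : InfinitePlace F // ¬ v.IsUnramified kf}
      = Nat.card (InfinitePlace K) := by
    refine Nat.card_congr (Equiv.ofBijective
      (fun v => (v : InfinitePlace F).comap (algebraMap K F)) ⟨?_, ?_⟩)
    · rintro ⟨v, hv⟩ ⟨v', hv'⟩ hcomap
      simp only at hcomap
      obtain ⟨σ, hσ⟩ := InfinitePlace.exists_smul_eq_of_comap_eq hcomap
      have hv2 : conj v = s₀ := (hunram_iff v).mp hv
      have hv'2 : conj v' = s₀ := (hunram_iff v').mp hv'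
      have hcomm : σ * s₀ = s₀ * σ := by
        have h1 : conj (σ • v) = σ * conj v * σ⁻¹ := hconj_smul σ v
        rw [hσ, hv'2, hv2] at h1
        calc σ * s₀ = (σ * s₀ * σ⁻¹) * σ := by group
          _ = s₀ * σ := by rw [← h1]
      have hcomm' : e σ * DihedralGroup.sr 0 = DihedralGroup.sr 0 * e σ := by
        rw [← hes₀, ← map_mul, ← map_mul, hcomm]
      rcases aux_comm_sr hq (e σ) hcomm' with h | h
      · have h2 : σ = 1 := e.injective (by rw [h, map_one])
        rw [h2, one_smul] at hσ
        exact Subtype.ext hσ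
      · have hσs : σ = s₀ := e.injective (by rw [h, hes₀])
        have h3 : v' = v := by rw [← hσ, hσs, ← hv2, hstab v]
        exact Subtype.ext h3.symm
    · intro u
      obtain ⟨v, hv⟩ := InfinitePlace.comap_surjective (K := F) u
      set x := e (conj v) with hx
      have hx1 : x ≠ 1 := fun h => hconj1 v (e.injective (by rw [← hx, h, map_one]))
      have hx2 : x * x = 1 := by rw [hx, ← map_mul, hinvol, map_one]
      obtain ⟨g', hg'⟩ := aux_conj_sr hq x hx1 hx2
      set g : G := e.symm g' with hg
      have heg : e g = g' := e.apply_symm_apply _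
      have hconj' : conj (g • v) = s₀ := by
        rw [hconj_smul]
        apply e.injective
        rw [map_mul, map_mul, map_inv, heg, ← hx, hg', hes₀]
      refine ⟨⟨g • v, (hunram_iff _).mpr hconj'⟩, ?_⟩
      have horb : v.comap (algebraMap K F) = (g • v).comap (algebraMap K F) :=
        (InfinitePlace.mem_orbit_iff (k := K)).mp ⟨g, rfl⟩
      show (g • v).comap (algebraMap K F) = u
      rw [← horb]
      exact hv
  -- number of real places of kf
  have hr1 : Nat.card {w : InfinitePlace kf // w.IsReal}
      = Nat.card {v : InfinitePlace F // ¬ v.IsUnramified kf} := by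
    refine (Nat.card_congr (Equiv.ofBijective
      (fun v : {v : InfinitePlace F // ¬ v.IsUnramified kf} =>
        (⟨(v : InfinitePlace F).comap (algebraMap kf F),
          (InfinitePlace.not_isUnramified_iff.mp v.2).2⟩ : {w : InfinitePlace kf // w.IsReal}))
      ⟨?_, ?_⟩)).symm
    · rintro ⟨v, hv⟩ ⟨v', hv'⟩ hcomap
      have hcomap' : v.comap (algebraMap kf F) = v'.comap (algebraMap kf F) := by
        have := congrArg Subtype.val hcomap
        simpa using this
      obtain ⟨τ, hτ⟩ := InfinitePlace.exists_smul_eq_of_comap_eq hcomap'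
      set σ : kf.fixingSubgroup := (IntermediateField.fixingSubgroupEquiv kf).symm τ with hσdef
      have hΦσ : IntermediateField.fixingSubgroupEquiv kf σ = τ :=
        (IntermediateField.fixingSubgroupEquiv kf).apply_symm_apply τ
      have hσv : (σ : G) • v = v' := by rw [← hPhi_smul, hΦσ]; exact hτ
      have hσH : (σ : G) ∈ H := by rw [← hfix]; exact σ.2
      have hvv : v = v' := by
        rcases (hmemH _).mp hσH with h | h
        · rw [h, one_smul] at hσv; exact hσv
        · rw [h, ← (hunram_iff v).mp hv, hstab v] at hσv; exact hσv
      exact Subtype.ext hvv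
    · rintro ⟨w, hw⟩
      obtain ⟨v, hv⟩ := InfinitePlace.comap_surjective (K := F) w
      have hvram : ¬ v.IsUnramified kf :=
        InfinitePlace.not_isUnramified_iff.mpr ⟨hFcomplex v, by
          have hv' : v.comap (algebraMap kf F) = w := hv
          rw [hv']; exact hw⟩
      exact ⟨⟨v, hvram⟩, Subtype.ext hv⟩
  have hcardK : Nat.card (InfinitePlace K) = Module.finrank ℚ K := by
    have h0 : InfinitePlace.nrComplexPlaces K = 0 := by
      have he : IsEmpty {w : InfinitePlace K // w.IsComplex} :=
        ⟨fun ⟨w, hw⟩ => (InfinitePlace.not_isComplex_iff_isReal.mpr (hKreal w)) hw⟩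
      exact Fintype.card_eq_zero
    have h1 := InfinitePlace.card_add_two_mul_card_eq_rank K
    have h2 := InfinitePlace.card_eq_nrRealPlaces_add_nrComplexPlaces K
    rw [Nat.card_eq_fintype_card]
    omega
  have hmain : Nat.card {w : InfinitePlace kf // w.IsReal} = Module.finrank ℚ K := by
    rw [hr1, hbij, hcardK]
  refine ⟨hmain, ?_⟩
  -- second part from degree count
  have hdeg : Nat.card {w : InfinitePlace kf // w.IsReal}
      + 2 * Nat.card {w : InfinitePlace kf // w.IsComplex} = Module.finrank ℚ kf := by
    rw [Nat.card_eq_fintype_card, Nat.card_eq_fintype_card]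
    exact InfinitePlace.card_add_two_mul_card_eq_rank kf
  have hQkf : Module.finrank ℚ kf = Module.finrank ℚ K * q := by
    have htower : IsScalarTower ℚ K kf :=
      IsScalarTower.of_algebraMap_eq' (Subsingleton.elim _ _)
    rw [← Module.finrank_mul_finrank ℚ K kf, hfinrankKkf]
  obtain ⟨q', rfl⟩ : ∃ q', q = q' + 1 := ⟨q - 1, by omega⟩
  rw [hQkf, Nat.mul_add, Nat.mul_one] at hdeg
  rw [hmain] at hdeg
  simp only [Nat.add_sub_cancel]
  omega
end

section
/- Let F/K be a dihedral extension of number fields of degree 2q (q odd) with K totally real of degree n and F totally imaginary, k the fixed field of an order-2 subgroup, and k' = ρ(k) for ρ a generator of the rotation subgroup. Then the unit groups satisfy O_k^× ∩ O_{k'}^× = O_K^×, and the product O_k^× O_{k'}^× has finite index in O_F^×. -/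
set_option linter.unusedSectionVars false
set_option maxHeartbeats 1000000
open DihedralGroup NumberField

section ZModAux
variable {q : ℕ} [NeZero q]

lemma aux_two_unit (hq : Odd q) : IsUnit (2 : ZMod q) := by
  have := (ZMod.isUnit_iff_coprime 2 q).mpr (Nat.coprime_two_left.mpr hq)
  simpa using this

lemma aux_two_ne_zero (hq : Odd q) (hq1 : 1 < q) : (2 : ZMod q) ≠ 0 := by
  intro h
  have h2 : ((2 : ℕ) : ZMod q) = 0 := by push_cast; exact h
  have hd := (ZMod.natCast_eq_zero_iff 2 q).mp h2
  have : q ≤ 2 := Nat.le_of_dvd (by norm_num) hd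
  interval_cases q
  · exact (Nat.not_odd_iff_even.mpr (by decide)) hq

lemma aux_sr_zpow (a : ZMod q) (k : ℤ) :
    (sr a : DihedralGroup q) ^ k = 1 ∨ (sr a : DihedralGroup q) ^ k = sr a := by
  have h2 : (sr a : DihedralGroup q) ^ (2 : ℤ) = 1 := by
    rw [zpow_two, sr_mul_self]
  have hk : k = 2 * (k / 2) + k % 2 := (Int.mul_ediv_add_emod k 2).symm
  have hmain : (sr a : DihedralGroup q) ^ k = (sr a) ^ (k % 2) := by
    conv_lhs => rw [hk]
    rw [zpow_add, zpow_mul, h2, one_zpow, one_mul]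
  rcases Int.emod_two_eq k with h | h
  · left; rw [hmain, h, zpow_zero]
  · right; rw [hmain, h, zpow_one]

lemma aux_conj_elt : (r 1 * sr 0 * (r 1)⁻¹ : DihedralGroup q) = sr (-2) := by
  have hinv : (r 1 : DihedralGroup q)⁻¹ = r (-1) := by
    apply inv_eq_of_mul_eq_one_right; rw [r_mul_r]; simp
  rw [hinv, r_mul_sr, sr_mul_r]
  norm_num

/-- the exponent function for the kf'-part -/
noncomputable def betaFn (q : ℕ) [NeZero q] : ZMod q → ℤ :=
  fun j => if j = 0 then 0 else 2 * (((2 : ZMod q)⁻¹ * j).val : ℤ) - 2 * q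

lemma aux_beta_rec (hq : Odd q) (hq1 : 1 < q) (j : ZMod q) :
    betaFn q (j + 2) = betaFn q j + 2 - (if j = 0 then 2 * (q : ℤ) else 0) := by
  haveI : Fact (1 < q) := ⟨hq1⟩
  have hu := aux_two_unit hq
  have hmul : (2 : ZMod q)⁻¹ * 2 = 1 := by
    rw [mul_comm]; exact ZMod.mul_inv_of_unit _ hu
  have hinj : ∀ a b : ZMod q, 2 * a = 2 * b → a = b := fun a b h => hu.mul_left_cancel h
  by_cases hj : j = 0
  · subst hj
    have h2 : ((0 : ZMod q) + 2) ≠ 0 := by simpa using aux_two_ne_zero hq hq1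
    rw [betaFn, betaFn, if_neg h2, if_pos rfl, if_pos rfl]
    rw [zero_add, hmul, ZMod.val_one]
    push_cast; ring
  · rw [betaFn, betaFn, if_neg hj, if_neg hj]
    by_cases hj2 : j + 2 = 0
    · have hjval : (2:ZMod q)⁻¹ * j = -1 := by
        have hjv : j = -2 := by linear_combination hj2
        rw [hjv]
        calc (2:ZMod q)⁻¹ * (-2) = -((2:ZMod q)⁻¹ * 2) := by ring
        _ = -1 := by rw [hmul]
      have hneg1 : ((-1 : ZMod q)).val = q - 1 := by
        have h1 : (-1 : ZMod q) = ((q - 1 : ℕ) : ZMod q) := by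
          have hq0 : ((q : ℕ) : ZMod q) = 0 := ZMod.natCast_self q
          have h3 : ((q - 1 : ℕ) : ZMod q) = (q : ZMod q) - 1 := by
            push_cast [Nat.cast_sub (by omega : 1 ≤ q)]; ring
          rw [h3, hq0]; ring
        rw [h1, ZMod.val_cast_of_lt (by omega)]
      rw [if_pos hj2, hjval, hneg1]
      have : ((q - 1 : ℕ) : ℤ) = (q : ℤ) - 1 := by push_cast [Nat.cast_sub (by omega : 1 ≤ q)]; ring
      rw [this]; ring
    · rw [if_neg hj2]
      set t := (2:ZMod q)⁻¹ * j with ht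
      have htj2 : (2:ZMod q)⁻¹ * (j + 2) = t + 1 := by rw [mul_add, hmul]
      have h2t : (2 : ZMod q) * t = j := by
        rw [ht, ← mul_assoc, mul_comm (2 : ZMod q) (2:ZMod q)⁻¹, hmul, one_mul]
      have ht1 : t + 1 ≠ 0 := by
        intro h; apply hj2
        have h4 : j + 2 = 2 * (t + 1) := by rw [mul_add, h2t, mul_one]
        rw [h4, h, mul_zero]
      have htne : t.val + 1 < q := by
        by_contra hcon
        have hlt := ZMod.val_lt t
        have h' : t.val = q - 1 := by omega
        apply ht1
        have h5 := ZMod.natCast_val (R := ZMod q) t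
        rw [ZMod.cast_id] at h5
        have h6 : t = ((q - 1 : ℕ) : ZMod q) := by rw [← h5, h']
        rw [h6]
        have h3 : ((q - 1 : ℕ) : ZMod q) = (q : ZMod q) - 1 := by
          push_cast [Nat.cast_sub (by omega : 1 ≤ q)]; ring
        rw [h3, ZMod.natCast_self]; ring
      have hval : (t + 1).val = t.val + 1 := by
        have hv1 : (1 : ZMod q).val = 1 := ZMod.val_one q
        have := ZMod.val_add_of_lt (a := t) (b := 1) (by rw [hv1]; omega)
        rw [this, hv1]
      rw [htj2, hval]
      push_cast; ring
end ZModAux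

lemma aux_prod_zpow_add {G : Type*} [CommGroup G] {ι : Type*} [Fintype ι] (f : ι → G)
    (c d : ι → ℤ) : ∏ i, f i ^ (c i + d i) = (∏ i, f i ^ c i) * ∏ i, f i ^ d i := by
  rw [← Finset.prod_mul_distrib]
  exact Finset.prod_congr rfl fun i _ => zpow_add (f i) (c i) (d i)

/-- The group of units of the ring of integers of an intermediate field `E` of
`F/K`, realized as a subgroup of `Fˣ`: the units `u` with `u ∈ E`, `u` integral
over `ℤ` and `u⁻¹` integral over `ℤ`. -/
def unitSubgroup {K F : Type*} [Field K] [Field F] [Algebra K F]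
    (E : IntermediateField K F) : Subgroup Fˣ where
  carrier := {u : Fˣ | (u : F) ∈ E ∧ IsIntegral ℤ (u : F) ∧
    IsIntegral ℤ (((u⁻¹ : Fˣ) : F))}
  one_mem' := ⟨one_mem E, isIntegral_one, by simpa using isIntegral_one⟩
  mul_mem' := fun {a b} ha hb => ⟨mul_mem ha.1 hb.1, ha.2.1.mul hb.2.1, by
    simpa [mul_comm] using ha.2.2.mul hb.2.2⟩
  inv_mem' := fun {a} ha => ⟨by simpa using inv_mem ha.1, ha.2.2, by
    simpa using ha.2.1⟩

section Field
variable {K F : Type*} [Field K] [NumberField K] [Field F] [NumberField F]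
  [Algebra K F] [IsGalois K F]

lemma mem_unitSubgroup {E : IntermediateField K F} {u : Fˣ} :
    u ∈ unitSubgroup E ↔ ((u : F) ∈ E ∧ IsIntegral ℤ (u : F) ∧
      IsIntegral ℤ (((u⁻¹ : Fˣ) : F))) := Iff.rfl

lemma aux_findim : FiniteDimensional K F := by
  have h : algebraMap ℚ F = (algebraMap K F).comp (algebraMap ℚ K) :=
    Subsingleton.elim _ _
  haveI : IsScalarTower ℚ K F := IsScalarTower.of_algebraMap_eq' h
  exact FiniteDimensional.right ℚ K F

lemma aux_mem_fixedField_iff {H : Subgroup (F ≃ₐ[K] F)} {x : F} :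
    x ∈ IntermediateField.fixedField H ↔ ∀ g ∈ H, g x = x := by
  constructor
  · intro h g hg; exact h ⟨g, hg⟩
  · intro h g; exact h g.1 g.2

lemma aux_allfixed_mem_bot {x : F} (h : ∀ g : F ≃ₐ[K] F, g x = x) :
    x ∈ (⊥ : IntermediateField K F) := by
  haveI := aux_findim (K := K) (F := F)
  have htop : IntermediateField.fixedField (⊤ : Subgroup (F ≃ₐ[K] F)) = ⊥ :=
    (List.TFAE.out (IsGalois.tfae (F := K) (E := F)) 0 1).mp (by infer_instance)
  rw [← htop]
  exact aux_mem_fixedField_iff.mpr fun g _ => h g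

/-- action of an automorphism on units -/
def autU {K F : Type*} [Field K] [Field F] [Algebra K F] (g : F ≃ₐ[K] F) : Fˣ →* Fˣ :=
  Units.map (g.toAlgHom.toRingHom.toMonoidHom)

@[simp] lemma autU_val (g : F ≃ₐ[K] F) (u : Fˣ) : ((autU g u : Fˣ) : F) = g (u : F) := rfl

@[simp] lemma autU_inv_val (g : F ≃ₐ[K] F) (u : Fˣ) :
    (((autU g u)⁻¹ : Fˣ) : F) = g ((u⁻¹ : Fˣ) : F) := by
  rw [← map_inv (autU g) u]; rfl

lemma autU_autU (g h : F ≃ₐ[K] F) (u : Fˣ) : autU g (autU h u) = autU (g * h) u := by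
  ext; simp [AlgEquiv.mul_apply]

lemma autU_one (u : Fˣ) : autU (1 : F ≃ₐ[K] F) u = u := by ext; simp

lemma autU_mem_top {u : Fˣ} (hu : u ∈ unitSubgroup (⊤ : IntermediateField K F))
    (g : F ≃ₐ[K] F) : autU g u ∈ unitSubgroup (⊤ : IntermediateField K F) := by
  refine ⟨trivial, ?_, ?_⟩
  · simpa using hu.2.1.map g.toAlgHom.toRingHom.toIntAlgHom
  · simpa using hu.2.2.map g.toAlgHom.toRingHom.toIntAlgHom

lemma aux_exists_conj (hKreal : ∀ v : NumberField.InfinitePlace K, v.IsReal)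
    (hFcomplex : ∀ w : NumberField.InfinitePlace F, w.IsComplex)
    (φ : F →+* ℂ) : ∃ c : F ≃ₐ[K] F, c ≠ 1 ∧ c * c = 1 ∧
      ∀ x : F, (starRingEnd ℂ) (φ x) = φ (c x) := by
  have hreal : ComplexEmbedding.IsReal (φ.comp (algebraMap K F)) :=
    InfinitePlace.isReal_mk_iff.mp (hKreal (InfinitePlace.mk _))
  have hcomp : (ComplexEmbedding.conjugate φ).comp (algebraMap K F)
      = φ.comp (algebraMap K F) := by
    ext x
    exact RingHom.congr_fun hreal x
  obtain ⟨σ, hσ⟩ := ComplexEmbedding.exists_comp_symm_eq_of_comp_eq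
    (ComplexEmbedding.conjugate φ) φ hcomp
  have hc : ∀ x : F, (starRingEnd ℂ) (φ x) = φ (σ x) := by
    intro x
    have := RingHom.congr_fun hσ (σ x)
    simpa using this
  refine ⟨σ, ?_, ?_, hc⟩
  · intro h1
    have hφreal : ComplexEmbedding.IsReal φ := by
      refine RingHom.ext fun x => ?_
      have := hc x
      rw [h1] at this
      simpa using this
    exact InfinitePlace.not_isReal_iff_isComplex.mpr (hFcomplex (InfinitePlace.mk φ))
      (InfinitePlace.isReal_mk_iff.mpr hφreal)
  · refine AlgEquiv.ext fun x => φ.injective ?_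
    rw [AlgEquiv.mul_apply, AlgEquiv.one_apply, ← hc (σ x), ← hc x,
      Complex.conj_conj]

variable {q : ℕ} [NeZero q]

lemma aux_fixed_all (hq : Odd q) (hq1 : 1 < q) (e : (F ≃ₐ[K] F) ≃* DihedralGroup q)
    {x : F} (h1 : e.symm (sr (0 : ZMod q)) x = x) (h2 : e.symm (sr (-2 : ZMod q)) x = x)
    (g : F ≃ₐ[K] F) : g x = x := by
  have hcomp : ∀ d d' : DihedralGroup q, e.symm d (e.symm d' x) = e.symm (d * d') x := by
    intro d d'; rw [map_mul, AlgEquiv.mul_apply]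
  have hr2 : e.symm (r (2 : ZMod q)) x = x := by
    have h3 : (sr (-2) * sr (0 : ZMod q) : DihedralGroup q) = r 2 := by
      rw [sr_mul_sr]; norm_num
    calc e.symm (r (2 : ZMod q)) x = e.symm (sr (-2) * sr 0) x := by rw [h3]
    _ = e.symm (sr (-2)) (e.symm (sr 0) x) := (hcomp _ _).symm
    _ = x := by rw [h1, h2]
  have hrpow : ∀ m : ℕ, e.symm ((r (2 : ZMod q) : DihedralGroup q) ^ m) x = x := by
    intro m; induction m with
    | zero => rw [pow_zero, map_one, AlgEquiv.one_apply]
    | succ n ih =>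
        rw [pow_succ, ← hcomp, hr2, ih]
  have hrall : ∀ i : ZMod q, e.symm (r i) x = x := by
    intro i
    have hu := aux_two_unit hq
    set m := ((2 : ZMod q)⁻¹ * i).val with hm
    have h2m : (2 : ZMod q) * ((m : ℕ) : ZMod q) = i := by
      rw [hm, ZMod.natCast_val, ZMod.cast_id, ← mul_assoc, ZMod.mul_inv_of_unit _ hu, one_mul]
    have hpow : (r (2 : ZMod q) : DihedralGroup q) ^ m = r i := by
      have h22 : (r (2 : ZMod q) : DihedralGroup q) = (r 1) ^ (2 : ℕ) := by
        rw [r_one_pow]; norm_num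
      rw [h22, ← pow_mul, r_one_pow]
      congr 1
      push_cast
      rw [← h2m]
    rw [← hpow]; exact hrpow m
  have hsr : ∀ i : ZMod q, e.symm (sr i) x = x := by
    intro i
    have h3 : (sr (0 : ZMod q) * r i : DihedralGroup q) = sr i := by rw [sr_mul_r, zero_add]
    calc e.symm (sr i) x = e.symm (sr 0 * r i) x := by rw [h3]
    _ = e.symm (sr 0) (e.symm (r i) x) := (hcomp _ _).symm
    _ = x := by rw [hrall, h1]
  have hg : g = e.symm (e g) := (e.symm_apply_apply g).symm
  rw [hg]
  cases he : e g with
  | r i => exact he ▸ hrall i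
  | sr i => exact he ▸ hsr i

lemma aux_mem_fixed_sr (e : (F ≃ₐ[K] F) ≃* DihedralGroup q) {a : ZMod q} {x : F}
    (hx : e.symm (sr a) x = x) :
    x ∈ IntermediateField.fixedField ((Subgroup.zpowers (sr a)).comap e.toMonoidHom) := by
  rw [aux_mem_fixedField_iff]
  intro g hg
  rw [Subgroup.mem_comap] at hg
  obtain ⟨k, hk⟩ := Subgroup.mem_zpowers_iff.mp hg
  have hk2 : sr a ^ k = e g := hk
  rcases aux_sr_zpow a k with h | h
  · have hg1 : g = 1 := by
      apply e.injective
      rw [map_one, ← hk2, h]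
    rw [hg1, AlgEquiv.one_apply]
  · have hg1 : g = e.symm (sr a) := by
      apply e.injective
      rw [MulEquiv.apply_symm_apply, ← hk2, h]
    rw [hg1]; exact hx
end Field

section PowMem
variable {K F : Type*} [Field K] [NumberField K] [Field F] [NumberField F]
  [Algebra K F] [IsGalois K F] {q : ℕ} [NeZero q]

lemma aux_pow_mem (hq : Odd q) (hq1 : 1 < q)
    (e : (F ≃ₐ[K] F) ≃* DihedralGroup q)
    (hKreal : ∀ v : NumberField.InfinitePlace K, v.IsReal)
    (hFcomplex : ∀ w : NumberField.InfinitePlace F, w.IsComplex)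
    (kf kf' : IntermediateField K F)
    (hk : kf = IntermediateField.fixedField
      ((Subgroup.zpowers (DihedralGroup.sr (0 : ZMod q))).comap e.toMonoidHom))
    (hk2 : kf' = IntermediateField.fixedField
      ((Subgroup.zpowers (DihedralGroup.sr (-2 : ZMod q))).comap e.toMonoidHom))
    (u : Fˣ) (hu : u ∈ unitSubgroup (⊤ : IntermediateField K F)) :
    ∃ m : ℕ, m ≠ 0 ∧ u ^ m ∈ unitSubgroup kf ⊔ unitSubgroup kf' := by
  classical
  set U : DihedralGroup q → Fˣ := fun d => autU (e.symm d) u with hU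
  have hUmul : ∀ d d' : DihedralGroup q, autU (e.symm d) (U d') = U (d * d') := by
    intro d d'
    rw [hU]
    simp only
    rw [autU_autU, ← map_mul]
  have hU1 : U (r 0) = u := by
    rw [hU]; simp only [← one_def, map_one]; exact autU_one u
  have hUmem : ∀ d, U d ∈ unitSubgroup (⊤ : IntermediateField K F) := fun d =>
    autU_mem_top hu _
  -- the building blocks in `kf` and `kf'`
  have hamem : ∀ j : ZMod q, U (r j) * U (sr j) ∈ unitSubgroup kf := by
    intro j
    have htop := (unitSubgroup (⊤ : IntermediateField K F)).mul_mem (hUmem (r j)) (hUmem (sr j))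
    have hfix : autU (e.symm (sr (0 : ZMod q))) (U (r j) * U (sr j)) = U (r j) * U (sr j) := by
      rw [map_mul, hUmul, hUmul, sr_mul_r, sr_mul_sr, zero_add, sub_zero, mul_comm]
    have hval : e.symm (sr (0 : ZMod q)) ((U (r j) * U (sr j) : Fˣ) : F)
        = ((U (r j) * U (sr j) : Fˣ) : F) := by
      have := congrArg (fun v : Fˣ => (v : F)) hfix
      simpa using this
    exact ⟨hk ▸ aux_mem_fixed_sr e hval, htop.2.1, htop.2.2⟩
  have hbmem : ∀ j : ZMod q, U (r j) * U (sr (j - 2)) ∈ unitSubgroup kf' := by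
    intro j
    have htop := (unitSubgroup (⊤ : IntermediateField K F)).mul_mem (hUmem (r j))
      (hUmem (sr (j - 2)))
    have hfix : autU (e.symm (sr (-2 : ZMod q))) (U (r j) * U (sr (j - 2)))
        = U (r j) * U (sr (j - 2)) := by
      rw [map_mul, hUmul, hUmul, sr_mul_r, sr_mul_sr,
        show (-2 : ZMod q) + j = j - 2 by ring, show (j - 2 : ZMod q) - -2 = j by ring, mul_comm]
    have hval : e.symm (sr (-2 : ZMod q)) ((U (r j) * U (sr (j - 2)) : Fˣ) : F)
        = ((U (r j) * U (sr (j - 2)) : Fˣ) : F) := by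
      have := congrArg (fun v : Fˣ => (v : F)) hfix
      simpa using this
    exact ⟨hk2 ▸ aux_mem_fixed_sr e hval, htop.2.1, htop.2.2⟩
  -- exponent functions
  set β : ZMod q → ℤ := betaFn q with hβ
  set α : ZMod q → ℤ := fun j => 1 - β (j + 2) with hα
  set Pr : (ZMod q → ℤ) → Fˣ := fun c => ∏ i : ZMod q, U (r i) ^ c i with hPr
  set Ps : (ZMod q → ℤ) → Fˣ := fun c => ∏ i : ZMod q, U (sr i) ^ c i with hPs
  set A : Fˣ := ∏ j : ZMod q, (U (r j) * U (sr j)) ^ α j with hA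
  set B : Fˣ := ∏ j : ZMod q, (U (r j) * U (sr (j - 2))) ^ β j with hB
  set w : Fˣ := Pr (fun _ => 1) * (Ps (fun _ => 1))⁻¹ with hw
  have hAmem : A ∈ unitSubgroup kf :=
    Subgroup.prod_mem _ fun j _ => Subgroup.zpow_mem _ (hamem j) _
  have hBmem : B ∈ unitSubgroup kf' :=
    Subgroup.prod_mem _ fun j _ => Subgroup.zpow_mem _ (hbmem j) _
  -- the group-ring identity
  have hAeq : A = Pr α * Ps α := by
    rw [hA, hPr, hPs]
    simp only [mul_zpow]
    rw [Finset.prod_mul_distrib]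
  have hBeq : B = Pr β * Ps (fun i => β (i + 2)) := by
    rw [hB, hPr, hPs]
    simp only [mul_zpow]
    rw [Finset.prod_mul_distrib]
    congr 1
    exact (Fintype.prod_equiv (Equiv.addRight (2 : ZMod q))
      (fun x => U (sr x) ^ β (x + 2)) (fun j => U (sr (j - 2)) ^ β j)
      (fun x => by simp)).symm
  have hexp : ∀ j : ZMod q, α j + β j + 1 = if j = 0 then 2 * (q : ℤ) else 0 := by
    intro j
    have hrec := aux_beta_rec hq hq1 j
    rw [← hβ] at hrec
    rw [hα]
    simp only
    by_cases hj : j = 0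
    · rw [if_pos hj] at hrec ⊢
      rw [hj] at hrec ⊢
      omega
    · rw [if_neg hj] at hrec ⊢
      omega
  have hr : Pr α * Pr β * (Pr fun _ => 1) = u ^ (2 * q) := by
    rw [hPr]
    simp only
    rw [← aux_prod_zpow_add, ← aux_prod_zpow_add]
    rw [Finset.prod_congr rfl (fun j _ => by rw [hexp j])]
    rw [Finset.prod_eq_single (0 : ZMod q)
      (fun b _ hb => by rw [if_neg hb, zpow_zero])
      (fun h => absurd (Finset.mem_univ _) h)]
    rw [if_pos rfl, hU1, show ((2 * (q : ℤ))) = ((2 * q : ℕ) : ℤ) by push_cast; ring,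
      zpow_natCast]
  have hs : Ps α * Ps (fun i => β (i + 2)) * (Ps fun _ => 1)⁻¹ = 1 := by
    rw [mul_inv_eq_one, hPs]
    simp only
    rw [← aux_prod_zpow_add]
    refine Finset.prod_congr rfl fun i _ => ?_
    rw [hα]
    simp only
    norm_num
  have hmain : u ^ (2 * q) = A * B * w := by
    rw [hAeq, hBeq, hw]
    rw [mul_mul_mul_comm (Pr α) (Ps α) (Pr β), mul_mul_mul_comm (Pr α * Pr β) _ (Pr fun _ => 1)]
    rw [hr, hs, mul_one]
  -- torsion of w
  have hwmem : w ∈ unitSubgroup (⊤ : IntermediateField K F) := by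
    rw [hw]
    refine Subgroup.mul_mem _ (Subgroup.prod_mem _ fun i _ => Subgroup.zpow_mem _ (hUmem _) _)
      (Subgroup.inv_mem _ (Subgroup.prod_mem _ fun i _ => Subgroup.zpow_mem _ (hUmem _) _))
  have hwnorm : ∀ φ : F →+* ℂ, ‖φ ((w : Fˣ) : F)‖ = 1 := by
    intro φ
    obtain ⟨c, hc1, hc2, hc⟩ := aux_exists_conj hKreal hFcomplex φ
    -- e c is a reflection
    obtain ⟨i₀, hi₀⟩ : ∃ i₀ : ZMod q, e c = sr i₀ := by
      cases hd : e c with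
      | r i =>
          exfalso
          have hdd : (r i * r i : DihedralGroup q) = 1 := by
            rw [← hd, ← map_mul, hc2, map_one]
          rw [r_mul_r, one_def] at hdd
          have hii : i + i = 0 := by
            have := DihedralGroup.r.injEq (n := q) (i + i) 0
            rw [hdd] at this
            simpa using this.symm ▸ rfl
          have hi0 : i = 0 := by
            have hu2 := aux_two_unit hq
            apply hu2.mul_left_cancel
            rw [mul_zero, two_mul, hii]
          apply hc1
          apply e.injective
          rw [hd, hi0, map_one, ← one_def]
      | sr i => exact ⟨i, rfl⟩
    have hce : c = e.symm (sr i₀) := by rw [← hi₀, MulEquiv.symm_apply_apply]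
    -- c maps w to w⁻¹
    have hcw : autU c w = w⁻¹ := by
      have hcR : autU c (Pr fun _ => 1) = Ps fun _ => 1 := by
        rw [hPr, hPs]
        simp only [zpow_one]
        rw [map_prod]
        refine Fintype.prod_equiv (Equiv.addLeft i₀) _ _ fun x => ?_
        rw [hce, hUmul, sr_mul_r]
        simp
      have hcS : autU c (Ps fun _ => 1) = Pr fun _ => 1 := by
        rw [hPr, hPs]
        simp only [zpow_one]
        rw [map_prod]
        refine Fintype.prod_equiv (Equiv.subRight i₀) _ _ fun x => ?_
        rw [hce, hUmul, sr_mul_sr]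
        simp
      rw [hw, map_mul, map_inv, hcR, hcS, mul_inv_rev, inv_inv]
    have hval : φ ((w : Fˣ) : F) * (starRingEnd ℂ) (φ ((w : Fˣ) : F)) = 1 := by
      rw [hc ((w : Fˣ) : F)]
      have hcwv : c ((w : Fˣ) : F) = ((w⁻¹ : Fˣ) : F) := by
        have := congrArg (fun v : Fˣ => (v : F)) hcw
        simpa using this
      rw [hcwv, ← map_mul, ← Units.val_mul, mul_inv_cancel, Units.val_one, map_one]
    have hns : Complex.normSq (φ ((w : Fˣ) : F)) = 1 := by
      have := hval
      rw [Complex.mul_conj] at this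
      exact_mod_cast this
    have habs := Complex.sq_norm (φ ((w : Fˣ) : F))
    rw [hns] at habs
    nlinarith [norm_nonneg (φ ((w : Fˣ) : F))]
  obtain ⟨n, hn, hwn⟩ := NumberField.Embeddings.pow_eq_one_of_norm_eq_one F ℂ hwmem.2.1 hwnorm
  have hwun : w ^ n = 1 := by
    ext
    rw [Units.val_pow_eq_pow_val, Units.val_one, hwn]
  refine ⟨2 * q * n, by positivity, ?_⟩
  have : u ^ (2 * q * n) = A ^ n * B ^ n := by
    rw [pow_mul, hmain, mul_pow, mul_pow, hwun, mul_one]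
  rw [this]
  exact Subgroup.mul_mem _
    (Subgroup.pow_mem _ (Subgroup.mem_sup_left hAmem) n)
    (Subgroup.pow_mem _ (Subgroup.mem_sup_right hBmem) n)
end PowMem

/-- Let `F/K` be a dihedral extension of number fields of degree `2q` (`q` odd)
with `K` totally real and `F` totally imaginary, `k` the fixed field of an
order-2 subgroup and `k' = ρ(k)`.  Then `O_k^× ∩ O_{k'}^× = O_K^×`, and the
product `O_k^× O_{k'}^×` has finite index in `O_F^×`. -/
theorem units_of_conjugate_reflection_fields
    (q : ℕ) [NeZero q] (hq : Odd q) (hq1 : 1 < q)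
    (K F : Type*) [Field K] [NumberField K] [Field F] [NumberField F]
    [Algebra K F] [IsGalois K F]
    (e : (F ≃ₐ[K] F) ≃* DihedralGroup q)
    (hKreal : ∀ v : NumberField.InfinitePlace K, v.IsReal)
    (hFcomplex : ∀ w : NumberField.InfinitePlace F, w.IsComplex)
    (kf kf' : IntermediateField K F)
    (hk : kf = IntermediateField.fixedField
      ((Subgroup.zpowers (DihedralGroup.sr (0 : ZMod q))).comap e.toMonoidHom))
    (hk' : kf' = IntermediateField.fixedField
      ((Subgroup.zpowers (DihedralGroup.r (1 : ZMod q) *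
          DihedralGroup.sr (0 : ZMod q) *
          (DihedralGroup.r (1 : ZMod q))⁻¹)).comap e.toMonoidHom)) :
    unitSubgroup kf ⊓ unitSubgroup kf' = unitSubgroup (⊥ : IntermediateField K F) ∧
    (unitSubgroup kf ⊔ unitSubgroup kf').relIndex
        (unitSubgroup (⊤ : IntermediateField K F)) ≠ 0 := by
  rw [aux_conj_elt] at hk'
  constructor
  · -- the intersection is the unit group of the base field
    ext u
    simp only [Subgroup.mem_inf, mem_unitSubgroup]
    constructor
    · rintro ⟨⟨h1, hi1, hi2⟩, h2, -, -⟩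
      refine ⟨aux_allfixed_mem_bot fun g => aux_fixed_all hq hq1 e ?_ ?_ g, hi1, hi2⟩
      · rw [hk] at h1
        exact aux_mem_fixedField_iff.mp h1 _ (by
          rw [Subgroup.mem_comap]
          exact Subgroup.mem_zpowers_iff.mpr ⟨1, by rw [zpow_one]; exact (e.apply_symm_apply _).symm⟩)
      · rw [hk'] at h2
        exact aux_mem_fixedField_iff.mp h2 _ (by
          rw [Subgroup.mem_comap]
          exact Subgroup.mem_zpowers_iff.mpr ⟨1, by rw [zpow_one]; exact (e.apply_symm_apply _).symm⟩)
    · rintro ⟨hb, hi1, hi2⟩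
      exact ⟨⟨(bot_le : (⊥ : IntermediateField K F) ≤ kf) hb, hi1, hi2⟩,
        (bot_le : (⊥ : IntermediateField K F) ≤ kf') hb, hi1, hi2⟩
  · -- finite index
    set T := unitSubgroup (⊤ : IntermediateField K F) with hT
    set J := unitSubgroup kf ⊔ unitSubgroup kf' with hJ
    haveI : Group.FG (𝓞 F)ˣ := Group.fg_iff_monoid_fg.mpr inferInstance
    let f : (𝓞 F)ˣ →* Fˣ := Units.map (algebraMap (𝓞 F) F).toMonoidHom
    have hrange : f.range = T := by
      ext x
      constructor
      · rintro ⟨v, rfl⟩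
        refine ⟨trivial, ?_, ?_⟩
        · exact NumberField.RingOfIntegers.isIntegral_coe _
        · rw [← map_inv]
          exact NumberField.RingOfIntegers.isIntegral_coe _
      · intro hx
        refine ⟨Units.mk ⟨(x : F), hx.2.1⟩ ⟨((x⁻¹ : Fˣ) : F), hx.2.2⟩
          (Subtype.ext (Units.mul_inv x)) (Subtype.ext (Units.inv_mul x)), Units.ext rfl⟩
    haveI hTfg : Group.FG T := by
      rw [← hrange]
      exact Group.fg_of_surjective f.rangeRestrict_surjective
    haveI : Group.FG (T ⧸ J.subgroupOf T) :=
      Group.fg_of_surjective (QuotientGroup.mk'_surjective _)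
    have htor : IsMulTorsion (T ⧸ J.subgroupOf T) := by
      intro x
      induction x using QuotientGroup.induction_on with
      | H t =>
        obtain ⟨m, hm0, hm⟩ := aux_pow_mem hq hq1 e hKreal hFcomplex kf kf' hk hk'
          (t : Fˣ) t.2
        rw [isOfFinOrder_iff_pow_eq_one]
        refine ⟨m, Nat.pos_of_ne_zero hm0, ?_⟩
        rw [← QuotientGroup.mk_pow, QuotientGroup.eq_one_iff]
        rw [Subgroup.mem_subgroupOf]
        simpa using hm
    haveI : Finite (T ⧸ J.subgroupOf T) := CommGroup.finite_of_fg_torsion _ htor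
    rw [Subgroup.relIndex]
    exact Subgroup.index_ne_zero_of_finite
end
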